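/- The splitting field over Q of the polynomial 1 - 4X + 2X^2 + 5X^3 - 2X^4 - X^5 is the unique degree-5 subfield of Q(ζ_11), namely the maximal real subfield of the 11th cyclotomic field. -/

import Mathlib

open Polynomial IntermediateField

noncomputable def quinticPoly : Polynomial ℚ :=
  1 - 4 * X + 2 * X ^ 2 + 5 * X ^ 3 - 2 * X ^ 4 - X ^ 5

lemma quinticPoly_ne_zero : quinticPoly ≠ 0 := by
  intro h
  have h0 : quinticPoly.eval 0 = 1 := by simp [quinticPoly]
  rw [h] at h0
  simp at h0

set_option maxHeartbeats 2000000 in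
lemma quintic_key (ζ : ℂ) (h11 : ζ ^ 11 = 1) (hinv : ζ⁻¹ = ζ ^ 10)
    (hΦ : 1 + ζ + ζ^2 + ζ^3 + ζ^4 + ζ^5 + ζ^6 + ζ^7 + ζ^8 + ζ^9 + ζ^10 = 0) (x : ℂ) : (aeval x) quinticPoly =
    -((x - (ζ^4 + ζ^5 + ζ^6 + ζ^7)) * (x - (ζ + ζ^3 + ζ^8 + ζ^10)) * (x - (ζ + ζ^4 + ζ^7 + ζ^10)) * (x - (ζ^2 + ζ^5 + ζ^6 + ζ^9)) * (x - (ζ^2 + ζ^3 + ζ^8 + ζ^9))) := by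
  simp only [quinticPoly, map_sub, map_add, map_mul, map_pow, map_one, map_ofNat, aeval_X]
  linear_combination (-94 - 93*ζ - 93*ζ^2 - 93*ζ^3 - 93*ζ^4 - 93*ζ^5 - 93*ζ^6 - 93*ζ^7 - 93*ζ^8 - 93*ζ^9 - 92*ζ^10 - 92*ζ^11 - 90*ζ^12 - 87*ζ^13 - 85*ζ^14 - 83*ζ^15 - 78*ζ^16 - 74*ζ^17 - 71*ζ^18 - 64*ζ^19 - 58*ζ^20 - 54*ζ^21 - 47*ζ^22 - 39*ζ^23 - 35*ζ^24 - 29*ζ^25 - 22*ζ^26 - 19*ζ^27 - 15*ζ^28 - 10*ζ^29 - 8*ζ^30 - 6*ζ^31 - 3*ζ^32 - 2*ζ^33 - 1*ζ^34 + 120*x + 116*x*ζ + 116*x*ζ^2 + 116*x*ζ^3 + 116*x*ζ^4 + 116*x*ζ^5 + 115*x*ζ^6 + 115*x*ζ^7 + 113*x*ζ^8 + 108*x*ζ^9 + 104*x*ζ^10 + 103*x*ζ^11 + 92*x*ζ^12 + 86*x*ζ^13 + 82*x*ζ^14 + 71*x*ζ^15 + 61*x*ζ^16 + 55*x*ζ^17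 + 45*x*ζ^18 + 34*x*ζ^19 + 30*x*ζ^20 + 24*x*ζ^21 + 17*x*ζ^22 + 12*x*ζ^23 + 8*x*ζ^24 + 3*x*ζ^25 + 1*x*ζ^26 + 1*x*ζ^27 - 60*x^2 - 58*x^2*ζ - 58*x^2*ζ^2 - 58*x^2*ζ^3 - 56*x^2*ζ^4 - 55*x^2*ζ^5 - 53*x^2*ζ^6 - 48*x^2*ζ^7 - 43*x^2*ζ^8 - 37*x^2*ζ^9 - 32*x^2*ζ^10 - 30*x^2*ζ^11 - 26*x^2*ζ^12 - 21*x^2*ζ^13 - 15*x^2*ζ^14 - 10*x^2*ζ^15 - 5*x^2*ζ^16 - 3*x^2*ζ^17 - 2*x^2*ζ^18 + 10*x^3 + 15*x^3*ζ + 14*x^3*ζ^2 + 11*x^3*ζ^3 + 11*x^3*ζ^4 + 9*x^3*ζ^5 + 6*x^3*ζ^6 + 4*x^3*ζ^7 + 4*x^3*ζ^8 + 1*x^3*ζ^9) * h11 + (-93 + 116*x - 58*x^2 + 15*x^3 - 2*x^4) * hΦ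

set_option maxHeartbeats 1000000 in
lemma quintic_mem1 (ζ : ℂ) (h11 : ζ ^ 11 = 1) (hinv : ζ⁻¹ = ζ ^ 10)
    (hΦ : 1 + ζ + ζ^2 + ζ^3 + ζ^4 + ζ^5 + ζ^6 + ζ^7 + ζ^8 + ζ^9 + ζ^10 = 0) : (ζ^4 + ζ^5 + ζ^6 + ζ^7 : ℂ) ∈ ℚ⟮ζ + ζ⁻¹⟯ := by
  have hηm : (ζ + ζ⁻¹) ∈ ℚ⟮ζ + ζ⁻¹⟯ := mem_adjoin_simple_self ℚ (ζ + ζ⁻¹)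
  have e : (ζ^4 + ζ^5 + ζ^6 + ζ^7 : ℂ) = 1 + 2*(ζ + ζ⁻¹) - (ζ + ζ⁻¹)^2 - (ζ + ζ⁻¹)^3 := by
    rw [hinv]
    linear_combination (2 + 3*ζ + 1*ζ^8 + 1*ζ^9 + 3*ζ^10 + 1*ζ^19) * h11 + 1 * hΦ
  rw [e]
  exact sub_mem (sub_mem (add_mem (one_mem _) (mul_mem (ofNat_mem _ 2) hηm)) (pow_mem hηm 2)) (pow_mem hηm 3)

set_option maxHeartbeats 1000000 in
lemma quintic_mem2 (ζ : ℂ) (h11 : ζ ^ 11 = 1) (hinv : ζ⁻¹ = ζ ^ 10)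
    (hΦ : 1 + ζ + ζ^2 + ζ^3 + ζ^4 + ζ^5 + ζ^6 + ζ^7 + ζ^8 + ζ^9 + ζ^10 = 0) : (ζ + ζ^3 + ζ^8 + ζ^10 : ℂ) ∈ ℚ⟮ζ + ζ⁻¹⟯ := by
  have hηm : (ζ + ζ⁻¹) ∈ ℚ⟮ζ + ζ⁻¹⟯ := mem_adjoin_simple_self ℚ (ζ + ζ⁻¹)
  have e : (ζ + ζ^3 + ζ^8 + ζ^10 : ℂ) = (ζ + ζ⁻¹)^3 - 2*(ζ + ζ⁻¹) := by
    rw [hinv]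
    linear_combination (-3*ζ - 1*ζ^8 - 3*ζ^10 - 1*ζ^19) * h11
  rw [e]
  exact sub_mem (pow_mem hηm 3) (mul_mem (ofNat_mem _ 2) hηm)

set_option maxHeartbeats 1000000 in
lemma quintic_mem3 (ζ : ℂ) (h11 : ζ ^ 11 = 1) (hinv : ζ⁻¹ = ζ ^ 10)
    (hΦ : 1 + ζ + ζ^2 + ζ^3 + ζ^4 + ζ^5 + ζ^6 + ζ^7 + ζ^8 + ζ^9 + ζ^10 = 0) : (ζ + ζ^4 + ζ^7 + ζ^10 : ℂ) ∈ ℚ⟮ζ + ζ⁻¹⟯ := by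
  have hηm : (ζ + ζ⁻¹) ∈ ℚ⟮ζ + ζ⁻¹⟯ := mem_adjoin_simple_self ℚ (ζ + ζ⁻¹)
  have e : (ζ + ζ^4 + ζ^7 + ζ^10 : ℂ) = 2 + (ζ + ζ⁻¹) - 4*(ζ + ζ⁻¹)^2 + (ζ + ζ⁻¹)^4 := by
    rw [hinv]
    linear_combination (2 - 4*ζ^2 - 1*ζ^7 - 6*ζ^11 - 1*ζ^18 - 4*ζ^20 - 1*ζ^29) * h11
  rw [e]
  exact add_mem (sub_mem (add_mem (ofNat_mem _ 2) hηm) (mul_mem (ofNat_mem _ 4) (pow_mem hηm 2))) (pow_mem hηm 4)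

set_option maxHeartbeats 1000000 in
lemma quintic_mem4 (ζ : ℂ) (h11 : ζ ^ 11 = 1) (hinv : ζ⁻¹ = ζ ^ 10)
    (hΦ : 1 + ζ + ζ^2 + ζ^3 + ζ^4 + ζ^5 + ζ^6 + ζ^7 + ζ^8 + ζ^9 + ζ^10 = 0) : (ζ^2 + ζ^5 + ζ^6 + ζ^9 : ℂ) ∈ ℚ⟮ζ + ζ⁻¹⟯ := by
  have hηm : (ζ + ζ⁻¹) ∈ ℚ⟮ζ + ζ⁻¹⟯ := mem_adjoin_simple_self ℚ (ζ + ζ⁻¹)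
  have e : (ζ^2 + ζ^5 + ζ^6 + ζ^9 : ℂ) = 2*(ζ + ζ⁻¹) + 4*(ζ + ζ⁻¹)^2 - (ζ + ζ⁻¹)^3 - (ζ + ζ⁻¹)^4 - 3 := by
    rw [hinv]
    linear_combination (-2 + 3*ζ + 4*ζ^2 + 1*ζ^7 + 1*ζ^8 + 3*ζ^10 + 6*ζ^11 + 1*ζ^18 + 1*ζ^19 + 4*ζ^20 + 1*ζ^29) * h11 + 1 * hΦ
  rw [e]
  exact sub_mem (sub_mem (sub_mem (add_mem (mul_mem (ofNat_mem _ 2) hηm) (mul_mem (ofNat_mem _ 4) (pow_mem hηm 2))) (pow_mem hηm 3)) (pow_mem hηm 4)) (ofNat_mem _ 3)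

set_option maxHeartbeats 1000000 in
lemma quintic_mem5 (ζ : ℂ) (h11 : ζ ^ 11 = 1) (hinv : ζ⁻¹ = ζ ^ 10)
    (hΦ : 1 + ζ + ζ^2 + ζ^3 + ζ^4 + ζ^5 + ζ^6 + ζ^7 + ζ^8 + ζ^9 + ζ^10 = 0) : (ζ^2 + ζ^3 + ζ^8 + ζ^9 : ℂ) ∈ ℚ⟮ζ + ζ⁻¹⟯ := by
  have hηm : (ζ + ζ⁻¹) ∈ ℚ⟮ζ + ζ⁻¹⟯ := mem_adjoin_simple_self ℚ (ζ + ζ⁻¹)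
  have e : (ζ^2 + ζ^3 + ζ^8 + ζ^9 : ℂ) = (ζ + ζ⁻¹)^2 + (ζ + ζ⁻¹)^3 - 3*(ζ + ζ⁻¹) - 2 := by
    rw [hinv]
    linear_combination (-2 - 3*ζ - 1*ζ^8 - 1*ζ^9 - 3*ζ^10 - 1*ζ^19) * h11
  rw [e]
  exact sub_mem (sub_mem (add_mem (pow_mem hηm 2) (pow_mem hηm 3)) (mul_mem (ofNat_mem _ 3) hηm)) (ofNat_mem _ 2)

set_option maxHeartbeats 1000000 in
lemma quintic_q0 (ζ : ℂ) (h11 : ζ ^ 11 = 1) (hinv : ζ⁻¹ = ζ ^ 10)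
    (hΦ : 1 + ζ + ζ^2 + ζ^3 + ζ^4 + ζ^5 + ζ^6 + ζ^7 + ζ^8 + ζ^9 + ζ^10 = 0) :
    (aeval (ζ + ζ⁻¹)) (X^5 + X^4 - 4*X^3 - 3*X^2 + 3*X + 1 : ℚ[X]) = 0 := by
  simp only [map_sub, map_add, map_mul, map_pow, map_one, map_ofNat, aeval_X]
  rw [hinv]
  linear_combination (-2*ζ + 4*ζ^2 + 5*ζ^3 + 1*ζ^6 + 1*ζ^7 + 1*ζ^8 + 1*ζ^9 - 2*ζ^10 + 6*ζ^11 + 10*ζ^12 + 1*ζ^17 + 1*ζ^18 + 1*ζ^19 + 4*ζ^20 + 10*ζ^21 + 1*ζ^28 + 1*ζ^29 + 5*ζ^30 + 1*ζ^39) * h11 + hΦ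

set_option maxHeartbeats 1000000 in
lemma quintic_eta_eq (ζ : ℂ) (h11 : ζ ^ 11 = 1) (hinv : ζ⁻¹ = ζ ^ 10)
    (hΦ : 1 + ζ + ζ^2 + ζ^3 + ζ^4 + ζ^5 + ζ^6 + ζ^7 + ζ^8 + ζ^9 + ζ^10 = 0) :
    (ζ + ζ⁻¹ : ℂ) = 3 - 7*(ζ^4 + ζ^5 + ζ^6 + ζ^7) - 7*(ζ^4 + ζ^5 + ζ^6 + ζ^7)^2 + 5*(ζ^4 + ζ^5 + ζ^6 + ζ^7)^3 + 2*(ζ^4 + ζ^5 + ζ^6 + ζ^7)^4 := by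
  rw [hinv]
  linear_combination (-60 - 64*ζ - 63*ζ^2 - 63*ζ^3 - 70*ζ^4 - 70*ζ^5 - 70*ζ^6 - 70*ζ^7 - 70*ζ^8 - 77*ζ^9 - 85*ζ^10 - 88*ζ^11 - 80*ζ^12 - 62*ζ^13 - 40*ζ^14 - 20*ζ^15 - 8*ζ^16 - 2*ζ^17) * h11 + (-63) * hΦ

lemma quintic_integral_eta (ζ : ℂ) (h11 : ζ ^ 11 = 1) (hinv : ζ⁻¹ = ζ ^ 10)
    (hΦ : 1 + ζ + ζ^2 + ζ^3 + ζ^4 + ζ^5 + ζ^6 + ζ^7 + ζ^8 + ζ^9 + ζ^10 = 0) : IsIntegral ℚ (ζ + ζ⁻¹) :=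
  ⟨X^5 + X^4 - 4*X^3 - 3*X^2 + 3*X + 1, by monicity!,
    by rw [← aeval_def]; exact quintic_q0 ζ h11 hinv hΦ⟩

lemma quintic_minpoly_le (ζ : ℂ) (h11 : ζ ^ 11 = 1) (hinv : ζ⁻¹ = ζ ^ 10)
    (hΦ : 1 + ζ + ζ^2 + ζ^3 + ζ^4 + ζ^5 + ζ^6 + ζ^7 + ζ^8 + ζ^9 + ζ^10 = 0) : (minpoly ℚ (ζ + ζ⁻¹)).natDegree ≤ 5 := by
  have hdvd : minpoly ℚ (ζ + ζ⁻¹) ∣ (X^5 + X^4 - 4*X^3 - 3*X^2 + 3*X + 1 : ℚ[X]) :=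
    minpoly.dvd ℚ _ (quintic_q0 ζ h11 hinv hΦ)
  have hne : (X^5 + X^4 - 4*X^3 - 3*X^2 + 3*X + 1 : ℚ[X]) ≠ 0 := by
    intro h
    have h0 : (X^5 + X^4 - 4*X^3 - 3*X^2 + 3*X + 1 : ℚ[X]).eval 0 = 1 := by simp
    rw [h] at h0
    simp at h0
  have hdeg : (X^5 + X^4 - 4*X^3 - 3*X^2 + 3*X + 1 : ℚ[X]).natDegree = 5 := by compute_degree!
  have := Polynomial.natDegree_le_of_dvd hdvd hne
  omega

lemma quintic_finrank10 (ζ : ℂ) (hζ : IsPrimitiveRoot ζ 11) :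
    Module.finrank ℚ ℚ⟮ζ⟯ = 10 := by
  have h11 : ζ ^ 11 = 1 := hζ.pow_eq_one
  have hintζ : IsIntegral ℚ ζ := by
    refine ⟨X^11 - 1, by monicity!, ?_⟩
    rw [← aeval_def]
    simp only [map_sub, map_pow, map_one, aeval_X]
    linear_combination h11
  rw [IntermediateField.adjoin.finrank hintζ,
    ← Polynomial.cyclotomic_eq_minpoly_rat hζ (by norm_num),
    Polynomial.natDegree_cyclotomic, Nat.totient_prime (by norm_num : Nat.Prime 11)]

set_option maxHeartbeats 2000000 in
set_option synthInstance.maxHeartbeats 1000000 in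
lemma quintic_rank_five (ζ : ℂ) (hζ : IsPrimitiveRoot ζ 11) (hinv : ζ⁻¹ = ζ ^ 10)
    (hΦ : 1 + ζ + ζ^2 + ζ^3 + ζ^4 + ζ^5 + ζ^6 + ζ^7 + ζ^8 + ζ^9 + ζ^10 = 0) :
    Module.finrank ℚ ℚ⟮ζ + ζ⁻¹⟯ = 5 := by
  have h11 : ζ ^ 11 = 1 := hζ.pow_eq_one
  have hintη : IsIntegral ℚ (ζ + ζ⁻¹) := quintic_integral_eta ζ h11 hinv hΦ
  have hfr : Module.finrank ℚ ℚ⟮ζ + ζ⁻¹⟯ = (minpoly ℚ (ζ + ζ⁻¹)).natDegree :=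
    IntermediateField.adjoin.finrank hintη
  have h10 : Module.finrank ℚ ℚ⟮ζ⟯ = 10 := quintic_finrank10 ζ hζ
  haveI : FiniteDimensional ℚ ℚ⟮ζ + ζ⁻¹⟯ := IntermediateField.adjoin.finiteDimensional hintη
  have hgen : algebraMap ℚ⟮ζ + ζ⁻¹⟯ ℂ (AdjoinSimple.gen ℚ (ζ + ζ⁻¹)) = ζ + ζ⁻¹ :=
    AdjoinSimple.algebraMap_gen ℚ (ζ + ζ⁻¹)
  have haevalζ : (aeval ζ) (X^2 - C (AdjoinSimple.gen ℚ (ζ + ζ⁻¹)) * X + 1) = 0 := by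
    simp only [map_sub, map_add, map_mul, map_pow, map_one, aeval_X, aeval_C, hgen]
    rw [hinv]
    linear_combination -h11
  have hζK : IsIntegral ℚ⟮ζ + ζ⁻¹⟯ ζ := by
    refine ⟨X^2 - C (AdjoinSimple.gen ℚ (ζ + ζ⁻¹)) * X + 1, by monicity!, ?_⟩
    rw [← aeval_def]
    exact haevalζ
  have hle2 : Module.finrank ℚ⟮ζ + ζ⁻¹⟯ ℚ⟮ζ + ζ⁻¹⟯⟮ζ⟯ ≤ 2 := by
    rw [IntermediateField.adjoin.finrank hζK]
    have hmono : (X^2 - C (AdjoinSimple.gen ℚ (ζ + ζ⁻¹)) * X + 1 :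
        Polynomial ℚ⟮ζ + ζ⁻¹⟯).Monic := by monicity!
    have hdvd := minpoly.dvd ℚ⟮ζ + ζ⁻¹⟯ ζ haevalζ
    have h2 := Polynomial.natDegree_le_of_dvd hdvd hmono.ne_zero
    have hdeg : (X^2 - C (AdjoinSimple.gen ℚ (ζ + ζ⁻¹)) * X + 1 :
        Polynomial ℚ⟮ζ + ζ⁻¹⟯).natDegree = 2 := by compute_degree!
    omega
  have hres : (ℚ⟮ζ + ζ⁻¹⟯⟮ζ⟯).restrictScalars ℚ = ℚ⟮ζ⟯ := by
    erw [IntermediateField.adjoin_adjoin_left]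
    apply le_antisymm
    · rw [IntermediateField.adjoin_le_iff]
      intro x hx
      rcases hx with h | h
      · rw [Set.mem_singleton_iff] at h
        rw [h]
        exact add_mem (mem_adjoin_simple_self ℚ ζ) (inv_mem (mem_adjoin_simple_self ℚ ζ))
      · rw [Set.mem_singleton_iff] at h
        rw [h]
        exact mem_adjoin_simple_self ℚ ζ
    · rw [IntermediateField.adjoin_simple_le_iff]
      exact IntermediateField.subset_adjoin ℚ _ (Or.inr rfl)
  have htower : Module.finrank ℚ ℚ⟮ζ + ζ⁻¹⟯ * Module.finrank ℚ⟮ζ + ζ⁻¹⟯ ℚ⟮ζ + ζ⁻¹⟯⟮ζ⟯ = 10 := by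
    rw [Module.finrank_mul_finrank ℚ ℚ⟮ζ + ζ⁻¹⟯ ℚ⟮ζ + ζ⁻¹⟯⟮ζ⟯]
    rw [← hres] at h10
    exact h10
  have h5le : Module.finrank ℚ ℚ⟮ζ + ζ⁻¹⟯ ≤ 5 := hfr ▸ quintic_minpoly_le ζ h11 hinv hΦ
  have hmul : Module.finrank ℚ ℚ⟮ζ + ζ⁻¹⟯ * Module.finrank ℚ⟮ζ + ζ⁻¹⟯ ℚ⟮ζ + ζ⁻¹⟯⟮ζ⟯ ≤
      Module.finrank ℚ ℚ⟮ζ + ζ⁻¹⟯ * 2 := Nat.mul_le_mul_left _ hle2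
  rw [htower] at hmul
  omega

set_option maxHeartbeats 1000000 in
theorem quintic_splitting_field :
    let ζ : ℂ := Complex.exp (2 * Real.pi * Complex.I / 11)
    IntermediateField.adjoin ℚ (quinticPoly.rootSet ℂ) = ℚ⟮ζ + ζ⁻¹⟯ ∧
    Module.finrank ℚ ℚ⟮ζ + ζ⁻¹⟯ = 5 := by
  intro ζ
  have hζ : IsPrimitiveRoot ζ 11 := by
    have h := Complex.isPrimitiveRoot_exp 11 (by norm_num)
    norm_num at h
    exact h
  clear_value ζ
  have h11 : ζ ^ 11 = 1 := hζ.pow_eq_one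
  have hζ1 : ζ ≠ 1 := hζ.ne_one (by norm_num)
  have hΦ : 1 + ζ + ζ^2 + ζ^3 + ζ^4 + ζ^5 + ζ^6 + ζ^7 + ζ^8 + ζ^9 + ζ^10 = 0 := by
    have h : (ζ - 1) * (1 + ζ + ζ^2 + ζ^3 + ζ^4 + ζ^5 + ζ^6 + ζ^7 + ζ^8 + ζ^9 + ζ^10) = 0 := by
      linear_combination h11
    rcases mul_eq_zero.mp h with h' | h'
    · exact absurd (sub_eq_zero.mp h') hζ1
    · exact h'
  have hinv : ζ⁻¹ = ζ ^ 10 := inv_eq_of_mul_eq_one_right (by linear_combination h11)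
  refine ⟨?_, quintic_rank_five ζ hζ hinv hΦ⟩
  apply le_antisymm
  · rw [IntermediateField.adjoin_le_iff]
    intro x hx
    have hx0 : (aeval x) quinticPoly = 0 := (mem_rootSet.mp hx).2
    rw [quintic_key ζ h11 hinv hΦ x] at hx0
    have hprod := neg_eq_zero.mp hx0
    rcases mul_eq_zero.mp hprod with h | h
    rotate_left
    · rw [sub_eq_zero.mp h]; exact quintic_mem5 ζ h11 hinv hΦ
    rcases mul_eq_zero.mp h with h | h
    rotate_left
    · rw [sub_eq_zero.mp h]; exact quintic_mem4 ζ h11 hinv hΦ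
    rcases mul_eq_zero.mp h with h | h
    rotate_left
    · rw [sub_eq_zero.mp h]; exact quintic_mem3 ζ h11 hinv hΦ
    rcases mul_eq_zero.mp h with h | h
    · rw [sub_eq_zero.mp h]; exact quintic_mem1 ζ h11 hinv hΦ
    · rw [sub_eq_zero.mp h]; exact quintic_mem2 ζ h11 hinv hΦ
  · rw [IntermediateField.adjoin_simple_le_iff]
    have hroot1 : (ζ^4 + ζ^5 + ζ^6 + ζ^7 : ℂ) ∈ quinticPoly.rootSet ℂ :=
      mem_rootSet.mpr ⟨quinticPoly_ne_zero, by rw [quintic_key ζ h11 hinv hΦ]; ring⟩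
    have hr1mem : (ζ^4 + ζ^5 + ζ^6 + ζ^7 : ℂ) ∈ IntermediateField.adjoin ℚ (quinticPoly.rootSet ℂ) :=
      IntermediateField.subset_adjoin ℚ _ hroot1
    rw [quintic_eta_eq ζ h11 hinv hΦ]
    exact add_mem (add_mem (sub_mem (sub_mem (ofNat_mem _ 3) (mul_mem (ofNat_mem _ 7) hr1mem))
      (mul_mem (ofNat_mem _ 7) (pow_mem hr1mem 2))) (mul_mem (ofNat_mem _ 5) (pow_mem hr1mem 3)))
      (mul_mem (ofNat_mem _ 2) (pow_mem hr1mem 4))
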